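/- With the notation of the preceding summation-by-parts identity, if additionally the sequence (ζ_n − ζ_{n-1}) is absolutely summable, the ζ_n are bounded, and Im θ_n ≥ 0 for all n (so that Im φ_n is nondecreasing), then there is a constant C independent of n and m such that |∑_{p=n}^{m} κ_p e^{−iφ_p}| ≤ C e^{Im φ_{m+1}} for all m ≥ n. -/

import Mathlib

open Finset Complex

lemma int_telescope (f : ℤ → ℂ) (n : ℤ) : ∀ m : ℤ, n ≤ m →
    ∑ p ∈ Finset.Icc n m, (f (p + 1) - f p) = f (m + 1) - f n := by
  refine Int.le_induction ?_ ?_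
  · simp
  · intro m hm ih
    have hins : Finset.Icc n (m + 1) = insert (m + 1) (Finset.Icc n m) := by
      ext x; simp only [Finset.mem_Icc, Finset.mem_insert]; omega
    rw [hins, Finset.sum_insert (by simp [Finset.mem_Icc]), ih]
    ring

lemma im_mono (φ : ℤ → ℂ) (him : ∀ n : ℤ, 0 ≤ (φ (n + 1) - φ n).im)
    (n : ℤ) : ∀ m : ℤ, n ≤ m → (φ n).im ≤ (φ m).im := by
  refine Int.le_induction ?_ ?_
  · exact le_rfl
  · intro m hm ih
    have := him m
    rw [Complex.sub_im] at this
    linarith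

theorem oscillating_sum_estimate (κ φ : ℤ → ℂ)
    (hexp : ∀ n : ℤ, Complex.exp (-I * (φ (n + 1) - φ n)) ≠ 1)
    (ζ : ℤ → ℂ)
    (hζ : ∀ n : ℤ, ζ n = κ n / (Complex.exp (-I * (φ (n + 1) - φ n)) - 1))
    (hsum : Summable fun n : ℤ => ‖ζ n - ζ (n - 1)‖)
    (hbdd : ∃ B : ℝ, ∀ n : ℤ, ‖ζ n‖ ≤ B)
    (him : ∀ n : ℤ, 0 ≤ (φ (n + 1) - φ n).im) :
    ∃ C : ℝ, ∀ n m : ℤ, n ≤ m →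
      ‖∑ p ∈ Finset.Icc n m, κ p * Complex.exp (-I * φ p)‖
        ≤ C * Real.exp ((φ (m + 1)).im) := by
  obtain ⟨B, hB⟩ := hbdd
  set S : ℝ := ∑' n : ℤ, ‖ζ n - ζ (n - 1)‖ with hSdef
  refine ⟨2 * B + S, ?_⟩
  intro n m hnm
  have hE : ∀ p : ℤ, ‖Complex.exp (-I * φ p)‖ = Real.exp ((φ p).im) := by
    intro p
    rw [Complex.norm_exp]
    congr 1
    simp [Complex.mul_re]
  -- rewrite the summand
  have hκ : ∀ p : ℤ, κ p * Complex.exp (-I * φ p)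
      = ζ p * Complex.exp (-I * φ (p + 1)) - ζ p * Complex.exp (-I * φ p) := by
    intro p
    have hne : Complex.exp (-I * (φ (p + 1) - φ p)) - 1 ≠ 0 :=
      sub_ne_zero.mpr (hexp p)
    have hκp : κ p = ζ p * (Complex.exp (-I * (φ (p + 1) - φ p)) - 1) := by
      rw [hζ p, div_mul_cancel₀ _ hne]
    have hadd : Complex.exp (-I * (φ (p + 1) - φ p)) * Complex.exp (-I * φ p)
        = Complex.exp (-I * φ (p + 1)) := by
      rw [← Complex.exp_add]; ring_nf
    calc κ p * Complex.exp (-I * φ p)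
        = ζ p * (Complex.exp (-I * (φ (p + 1) - φ p)) * Complex.exp (-I * φ p))
          - ζ p * Complex.exp (-I * φ p) := by rw [hκp]; ring
      _ = ζ p * Complex.exp (-I * φ (p + 1)) - ζ p * Complex.exp (-I * φ p) := by
          rw [hadd]
  set f : ℤ → ℂ := fun p => ζ (p - 1) * Complex.exp (-I * φ p) with hf
  have hsplit : ∀ p : ℤ, κ p * Complex.exp (-I * φ p)
      = (f (p + 1) - f p) - (ζ p - ζ (p - 1)) * Complex.exp (-I * φ p) := by
    intro p
    rw [hκ p]
    simp only [hf, add_sub_cancel_right]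
    ring
  have hsumeq : ∑ p ∈ Finset.Icc n m, κ p * Complex.exp (-I * φ p)
      = (f (m + 1) - f n)
        - ∑ p ∈ Finset.Icc n m, (ζ p - ζ (p - 1)) * Complex.exp (-I * φ p) := by
    rw [← int_telescope f n m hnm, ← Finset.sum_sub_distrib]
    exact Finset.sum_congr rfl fun p _ => hsplit p
  rw [hsumeq]
  have hBnn : 0 ≤ B := le_trans (norm_nonneg _) (hB 0)
  have hmono : ∀ p q : ℤ, p ≤ q → (φ p).im ≤ (φ q).im := fun p q h => im_mono φ him p q h
  have hfb : ∀ p : ℤ, p ≤ m + 1 → ‖f p‖ ≤ B * Real.exp ((φ (m + 1)).im) := by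
    intro p hp
    rw [hf]
    simp only [norm_mul, hE]
    exact mul_le_mul (hB _) (Real.exp_le_exp.mpr (hmono _ _ hp)) (Real.exp_nonneg _) hBnn
  have hsum2 : ‖∑ p ∈ Finset.Icc n m, (ζ p - ζ (p - 1)) * Complex.exp (-I * φ p)‖
      ≤ S * Real.exp ((φ (m + 1)).im) := by
    calc ‖∑ p ∈ Finset.Icc n m, (ζ p - ζ (p - 1)) * Complex.exp (-I * φ p)‖
        ≤ ∑ p ∈ Finset.Icc n m, ‖(ζ p - ζ (p - 1)) * Complex.exp (-I * φ p)‖ :=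
          norm_sum_le _ _
      _ ≤ ∑ p ∈ Finset.Icc n m, ‖ζ p - ζ (p - 1)‖ * Real.exp ((φ (m + 1)).im) := by
          refine Finset.sum_le_sum fun p hp => ?_
          rw [norm_mul, hE]
          refine mul_le_mul_of_nonneg_left ?_ (norm_nonneg _)
          refine Real.exp_le_exp.mpr (hmono _ _ ?_)
          have := (Finset.mem_Icc.mp hp).2
          omega
      _ = (∑ p ∈ Finset.Icc n m, ‖ζ p - ζ (p - 1)‖) * Real.exp ((φ (m + 1)).im) := by
          rw [← Finset.sum_mul]
      _ ≤ S * Real.exp ((φ (m + 1)).im) := by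
          refine mul_le_mul_of_nonneg_right ?_ (Real.exp_nonneg _)
          exact Summable.sum_le_tsum _ (fun p _ => norm_nonneg _) hsum
  calc ‖(f (m + 1) - f n)
        - ∑ p ∈ Finset.Icc n m, (ζ p - ζ (p - 1)) * Complex.exp (-I * φ p)‖
      ≤ ‖f (m + 1)‖ + ‖f n‖
        + ‖∑ p ∈ Finset.Icc n m, (ζ p - ζ (p - 1)) * Complex.exp (-I * φ p)‖ := by
        refine le_trans (norm_sub_le _ _) ?_
        gcongr
        exact norm_sub_le _ _
    _ ≤ B * Real.exp ((φ (m + 1)).im) + B * Real.exp ((φ (m + 1)).im)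
        + S * Real.exp ((φ (m + 1)).im) := by
        gcongr
        · exact hfb _ le_rfl
        · exact hfb _ (by omega)
    _ = (2 * B + S) * Real.exp ((φ (m + 1)).im) := by ring
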